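/- arXiv:1003.4335 — 4 statements merged into one kernel-verified Lean document; each statement's English description precedes it below -/
import Mathlib

section
/- Let γ > 1, n ≥ 2, B₀ > 0, K₀ = 2(γ−1)B₀/(γ+1), and 0 < r₀ < r₁. Suppose u : [r₀, r₁] → ℝ is differentiable, satisfies the ODE u'(r) = 2(n−1)(γ−1)·u(r)·(B₀ − u(r)²/2) / ((γ+1)·r·(u(r)² − K₀)) on [r₀, r₁], and K₀ < u(r₀)² < 2B₀ with u(r₀) > 0. Then u(r) > √K₀ and u'(r) > 0 for all r ∈ [r₀, r₁]; i.e., a radial supersonic solution remains supersonic and its speed is monotonically increasing in r. -/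
set_option maxHeartbeats 1000000


/-- A radial supersonic solution of the potential-flow ODE in a divergent nozzle remains
supersonic and its speed is monotonically increasing in `r`. -/
theorem stmt4 (γ B₀ r₀ r₁ : ℝ) (n : ℕ) (hγ : 1 < γ) (hn : 2 ≤ n) (hB : 0 < B₀)
    (hr0 : 0 < r₀) (hr : r₀ < r₁)
    (K₀ : ℝ) (hK : K₀ = 2 * (γ - 1) * B₀ / (γ + 1))
    (u : ℝ → ℝ)
    (hode : ∀ r ∈ Set.Icc r₀ r₁, HasDerivAt u
      (2 * ((n : ℝ) - 1) * (γ - 1) * u r * (B₀ - u r ^ 2 / 2)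
        / ((γ + 1) * r * (u r ^ 2 - K₀))) r)
    (hinit1 : K₀ < u r₀ ^ 2) (hinit2 : u r₀ ^ 2 < 2 * B₀) (hpos : 0 < u r₀) :
    ∀ r ∈ Set.Icc r₀ r₁, Real.sqrt K₀ < u r ∧
      0 < 2 * ((n : ℝ) - 1) * (γ - 1) * u r * (B₀ - u r ^ 2 / 2)
        / ((γ + 1) * r * (u r ^ 2 - K₀)) := by
  have hγ1 : 0 < γ - 1 := by linarith
  have hγ2 : 0 < γ + 1 := by linarith
  have hK0 : 0 < K₀ := by rw [hK]; positivity
  have hn1 : (1:ℝ) ≤ (n:ℝ) - 1 := by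
    have : (2:ℝ) ≤ (n:ℝ) := by exact_mod_cast hn
    linarith
  set s := Real.sqrt K₀ with hs
  set b := Real.sqrt (2*B₀) with hb
  have hs0 : 0 ≤ s := Real.sqrt_nonneg _
  have hb0 : 0 ≤ b := Real.sqrt_nonneg _
  have hssq : s^2 = K₀ := Real.sq_sqrt hK0.le
  have hbsq : b^2 = 2*B₀ := Real.sq_sqrt (by positivity)
  have hu0 : s < u r₀ := by
    have h := Real.sqrt_lt_sqrt hK0.le hinit1
    rwa [Real.sqrt_sq hpos.le] at h
  have hu0b : u r₀ < b := by
    have h := Real.sqrt_lt_sqrt (sq_nonneg _) hinit2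
    rwa [Real.sqrt_sq hpos.le] at h
  have hcont : ContinuousOn u (Set.Icc r₀ r₁) := fun r hr' =>
    (hode r hr').continuousAt.continuousWithinAt
  -- positivity of the RHS at "good" points
  have hRHS : ∀ r ∈ Set.Icc r₀ r₁, s < u r → u r < b →
      0 < 2 * ((n : ℝ) - 1) * (γ - 1) * u r * (B₀ - u r ^ 2 / 2)
        / ((γ + 1) * r * (u r ^ 2 - K₀)) := by
    intro r hr' h1 h2
    have hur : 0 < u r := lt_of_le_of_lt hs0 h1
    have husq : u r ^ 2 < 2 * B₀ := by nlinarith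
    have hKu : K₀ < u r ^ 2 := by nlinarith
    have hrpos : 0 < r := lt_of_lt_of_le hr0 hr'.1
    apply div_pos
    · have h2' : 0 < 2 * ((n:ℝ) - 1) * (γ - 1) := by nlinarith
      exact mul_pos (mul_pos h2' hur) (by nlinarith)
    · exact mul_pos (mul_pos hγ2 hrpos) (by linarith)
  suffices hGood : ∀ r ∈ Set.Icc r₀ r₁, s < u r ∧ u r < b by
    intro r hr'
    exact ⟨(hGood r hr').1, hRHS r hr' (hGood r hr').1 (hGood r hr').2⟩
  by_contra hcon
  push_neg at hcon
  obtain ⟨rb, hrb, hbad⟩ := hcon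
  set Bad : Set ℝ := {r | r ∈ Set.Icc r₀ r₁ ∧ (u r ≤ s ∨ b ≤ u r)} with hBad
  have hBsub : Bad ⊆ Set.Icc r₀ r₁ := fun x hx => hx.1
  have hBne : Bad.Nonempty := by
    refine ⟨rb, hrb, ?_⟩
    rcases le_or_gt (u rb) s with h | h
    · exact Or.inl h
    · exact Or.inr (hbad h)
  have hBclosed : IsClosed Bad := by
    have : Bad = Set.Icc r₀ r₁ ∩ u ⁻¹' (Set.Iic s ∪ Set.Ici b) := by
      ext x; simp [hBad, Set.mem_Iic, Set.mem_Ici]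
    rw [this]
    exact hcont.preimage_isClosed_of_isClosed isClosed_Icc
      (isClosed_Iic.union isClosed_Ici)
  have hBbdd : BddBelow Bad := (bddBelow_Icc (a := r₁) (b := r₀)).mono hBsub
  set T := sInf Bad with hT
  have hTmem : T ∈ Bad := hBclosed.csInf_mem hBne hBbdd
  have hTIcc : T ∈ Set.Icc r₀ r₁ := hTmem.1
  clear_value T
  have hTr0 : r₀ < T := by
    rcases eq_or_lt_of_le hTIcc.1 with h | h
    · exfalso
      rcases hTmem.2 with h' | h' <;> rw [← h] at h' <;> linarith
    · exact h
  -- all points before T are good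
  have hGoodBefore : ∀ t ∈ Set.Ico r₀ T, s < u t ∧ u t < b := by
    intro t ht
    by_contra h
    have htIcc : t ∈ Set.Icc r₀ r₁ := ⟨ht.1, le_trans ht.2.le hTIcc.2⟩
    have : t ∈ Bad := by
      refine ⟨htIcc, ?_⟩
      rcases le_or_gt (u t) s with h1 | h1
      · exact Or.inl h1
      · rcases le_or_gt b (u t) with h2 | h2
        · exact Or.inr h2
        · exact absurd ⟨h1, h2⟩ h
    exact absurd (hT ▸ csInf_le hBbdd this) (not_le.mpr ht.2)
  have hsubT : Set.Icc r₀ T ⊆ Set.Icc r₀ r₁ :=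
    Set.Icc_subset_Icc le_rfl hTIcc.2
  have hmono : StrictMonoOn u (Set.Icc r₀ T) := by
    apply strictMonoOn_of_deriv_pos (convex_Icc _ _) (hcont.mono hsubT)
    intro x hx
    rw [interior_Icc] at hx
    have hxI : x ∈ Set.Icc r₀ r₁ := hsubT ⟨hx.1.le, hx.2.le⟩
    have hg := hGoodBefore x ⟨hx.1.le, hx.2⟩
    rw [(hode x hxI).deriv]
    exact hRHS x hxI hg.1 hg.2
  have huT : u r₀ < u T :=
    hmono ⟨le_rfl, hTr0.le⟩ ⟨hTr0.le, le_rfl⟩ hTr0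
  rcases hTmem.2 with hlow | hhigh
  · linarith
  -- upper barrier: Grönwall-type argument
  · set δ : ℝ := u r₀ ^ 2 - K₀ with hδdef
    have hδ : 0 < δ := by rw [hδdef]; linarith
    set M : ℝ := 2 * ((n:ℝ) - 1) * (γ - 1) * (2 * B₀) / ((γ + 1) * r₀ * δ) with hMdef
    have hM0 : 0 ≤ M := by positivity
    have hM' : M * ((γ + 1) * r₀ * δ) = 2 * ((n:ℝ) - 1) * (γ - 1) * (2 * B₀) := by
      rw [hMdef]
      exact div_mul_cancel₀ _ (by positivity)
    set W : ℝ → ℝ := fun r => (2 * B₀ - u r ^ 2) * Real.exp (M * r) with hWdef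
    have hW : ∀ x ∈ Set.Icc r₀ r₁, HasDerivAt W
        ((0 - 2 * u x ^ 1 * (2 * ((n : ℝ) - 1) * (γ - 1) * u x * (B₀ - u x ^ 2 / 2)
          / ((γ + 1) * x * (u x ^ 2 - K₀)))) * Real.exp (M * x)
          + (2 * B₀ - u x ^ 2) * (Real.exp (M * x) * M)) x := by
      intro x hx
      have hexp : HasDerivAt (fun r => Real.exp (M * r)) (Real.exp (M * x) * M) x := by
        simpa using (((hasDerivAt_id x).const_mul M).exp)
      exact ((hasDerivAt_const x (2 * B₀)).sub ((hode x hx).pow 2)).mul hexp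
    clear_value δ M W
    have hWmono : MonotoneOn W (Set.Icc r₀ T) := by
      apply monotoneOn_of_deriv_nonneg (convex_Icc _ _)
      · rw [hWdef]
        exact ((continuousOn_const.sub ((hcont.mono hsubT).pow 2)).mul
          (Real.continuous_exp.comp (continuous_const.mul continuous_id')).continuousOn)
      · intro x hx
        rw [interior_Icc] at hx
        exact (hW x (hsubT ⟨hx.1.le, hx.2.le⟩)).differentiableAt.differentiableWithinAt
      · intro x hx
        rw [interior_Icc] at hx
        have hxI : x ∈ Set.Icc r₀ r₁ := hsubT ⟨hx.1.le, hx.2.le⟩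
        rw [(hW x hxI).deriv]
        have hg := hGoodBefore x ⟨hx.1.le, hx.2⟩
        have hux : 0 < u x := lt_of_le_of_lt hs0 hg.1
        have husq : u x ^ 2 < 2 * B₀ := by nlinarith [hg.2]
        have huge : u r₀ < u x := hmono ⟨le_rfl, hTr0.le⟩ ⟨hx.1.le, hx.2.le⟩ hx.1
        have hKu : δ ≤ u x ^ 2 - K₀ := by simp only [hδdef]; nlinarith
        have hDen : 0 < (γ + 1) * x * (u x ^ 2 - K₀) :=
          mul_pos (mul_pos hγ2 (lt_trans hr0 hx.1)) (by nlinarith)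
        have key : 2 * u x * (2 * ((n : ℝ) - 1) * (γ - 1) * u x * (B₀ - u x ^ 2 / 2)
            / ((γ + 1) * x * (u x ^ 2 - K₀))) ≤ (2 * B₀ - u x ^ 2) * M := by
          rw [mul_div_assoc', div_le_iff₀ hDen]
          have h1 : 2 * ((n:ℝ) - 1) * (γ - 1) * u x ^ 2 ≤ M * ((γ + 1) * r₀ * δ) := by
            rw [hM']
            have hc : (0:ℝ) < 2 * ((n:ℝ) - 1) * (γ - 1) := by nlinarith
            nlinarith [mul_le_mul_of_nonneg_left husq.le hc.le]
          have h2 : M * ((γ + 1) * r₀ * δ) ≤ M * ((γ + 1) * x * (u x ^ 2 - K₀)) := by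
            apply mul_le_mul_of_nonneg_left _ hM0
            have hx0 : r₀ ≤ x := hx.1.le
            have hfac : (γ + 1) * r₀ ≤ (γ + 1) * x := by nlinarith
            exact mul_le_mul hfac hKu hδ.le (by nlinarith)
          have h12 := h1.trans h2
          nlinarith [mul_le_mul_of_nonneg_left h12 (by linarith : (0:ℝ) ≤ 2 * B₀ - u x ^ 2)]
        have hE : 0 < Real.exp (M * x) := Real.exp_pos _
        simp only [pow_one]
        nlinarith [mul_le_mul_of_nonneg_right key hE.le]
    have hWle : W r₀ ≤ W T := hWmono ⟨le_rfl, hTr0.le⟩ ⟨hTr0.le, le_rfl⟩ hTr0.le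
    have hWr0 : 0 < W r₀ := by
      simp only [hWdef]
      exact mul_pos (by linarith) (Real.exp_pos _)
    have hWT : W T ≤ 0 := by
      simp only [hWdef]
      have h2B : 2 * B₀ - u T ^ 2 ≤ 0 := by nlinarith
      exact mul_nonpos_iff.mpr (Or.inr ⟨h2B, (Real.exp_pos _).le⟩)
    exact absurd hWle (not_le.mpr (lt_of_le_of_lt hWT hWr0))
end

section
/- Let γ > 1, n ≥ 2, B₀ > 0, K₀ = 2(γ−1)B₀/(γ+1), and r_s ∈ (r₀, r₁). Suppose u : [r_s, r₁] → ℝ is differentiable, satisfies u'(r) = 2(n−1)(γ−1)·u(r)·(B₀ − u(r)²/2) / ((γ+1)·r·(u(r)² − K₀)) on [r_s, r₁], and 0 < u(r_s)² < K₀. Then 0 < u(r) < √K₀ and u'(r) < 0 for all r ∈ [r_s, r₁]; i.e., a radial subsonic solution remains subsonic with decreasing speed. -/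
set_option maxHeartbeats 1000000 in
/-- A radial subsonic solution of the potential-flow ODE in a divergent nozzle remains
subsonic with decreasing speed. -/
theorem stmt5 (γ B₀ r₀ r₁ rs : ℝ) (n : ℕ) (hγ : 1 < γ) (hn : 2 ≤ n) (hB : 0 < B₀)
    (hr0 : 0 < r₀) (hrs : rs ∈ Set.Ioo r₀ r₁)
    (K₀ : ℝ) (hK : K₀ = 2 * (γ - 1) * B₀ / (γ + 1))
    (u : ℝ → ℝ)
    (hode : ∀ r ∈ Set.Icc rs r₁, HasDerivAt u
      (2 * ((n : ℝ) - 1) * (γ - 1) * u r * (B₀ - u r ^ 2 / 2)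
        / ((γ + 1) * r * (u r ^ 2 - K₀))) r)
    (hinit1 : 0 < u rs) (hinit2 : u rs ^ 2 < K₀) :
    ∀ r ∈ Set.Icc rs r₁, (0 < u r ∧ u r < Real.sqrt K₀) ∧
      2 * ((n : ℝ) - 1) * (γ - 1) * u r * (B₀ - u r ^ 2 / 2)
        / ((γ + 1) * r * (u r ^ 2 - K₀)) < 0 := by
  obtain ⟨hrs0, hrs1⟩ := hrs
  have hrsp : 0 < rs := hr0.trans hrs0
  have hC : (0:ℝ) < γ + 1 := by linarith
  have hn2 : (2:ℝ) ≤ (n:ℝ) := by exact_mod_cast hn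
  obtain ⟨A, hAdef⟩ : ∃ A : ℝ, A = 2 * ((n:ℝ) - 1) * (γ - 1) := ⟨_, rfl⟩
  have hA : 0 < A := by rw [hAdef]; nlinarith
  have hK0 : 0 < K₀ := by rw [hK]; exact div_pos (by nlinarith) hC
  have hK2B : K₀ < 2 * B₀ := by rw [hK, div_lt_iff₀ hC]; nlinarith
  obtain ⟨δ, hδdef⟩ : ∃ d : ℝ, d = K₀ - u rs ^ 2 := ⟨_, rfl⟩
  have hδ : 0 < δ := by rw [hδdef]; linarith
  obtain ⟨M, hMdef⟩ : ∃ m : ℝ, m = A * B₀ / ((γ + 1) * rs * δ) := ⟨_, rfl⟩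
  have hM : 0 < M := by rw [hMdef]; exact div_pos (mul_pos hA hB) (by positivity)
  obtain ⟨f, hfdef⟩ : ∃ f : ℝ → ℝ,
      f = fun r => A * u r * (B₀ - u r ^ 2 / 2) / ((γ + 1) * r * (u r ^ 2 - K₀)) :=
    ⟨_, rfl⟩
  have hode' : ∀ r ∈ Set.Icc rs r₁, HasDerivAt u (f r) r := by
    intro r hr
    simp only [hfdef, hAdef]
    exact hode r hr
  -- sign and bound on the right-hand side in the invariant region
  have freg : ∀ r ∈ Set.Icc rs r₁, 0 < u r → u r ≤ u rs →
      f r < 0 ∧ -(M * u r) ≤ f r := by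
    intro r hr hu hule
    have hrpos : 0 < r := lt_of_lt_of_le hrsp hr.1
    have husq : u r ^ 2 < K₀ := by nlinarith
    have hBu : 0 < B₀ - u r ^ 2 / 2 := by nlinarith
    have hnum : 0 < A * u r * (B₀ - u r ^ 2 / 2) := mul_pos (mul_pos hA hu) hBu
    have hden : (γ + 1) * r * (u r ^ 2 - K₀) < 0 :=
      mul_neg_of_pos_of_neg (mul_pos hC hrpos) (by linarith)
    have hfr : f r = A * u r * (B₀ - u r ^ 2 / 2) / ((γ + 1) * r * (u r ^ 2 - K₀)) := by
      rw [hfdef]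
    rw [hfr]
    refine ⟨div_neg_of_pos_of_neg hnum hden, ?_⟩
    rw [le_div_iff_of_neg hden]
    have husq2 : u r ^ 2 ≤ u rs ^ 2 := by nlinarith
    have h2 : (γ + 1) * rs * δ ≤ (γ + 1) * r * (K₀ - u r ^ 2) := by
      have : δ ≤ K₀ - u r ^ 2 := by rw [hδdef]; linarith
      have h3 : (γ + 1) * rs ≤ (γ + 1) * r :=
        mul_le_mul_of_nonneg_left hr.1 hC.le
      nlinarith [mul_pos hC hrsp]
    have hMδ : M * ((γ + 1) * rs * δ) = A * B₀ := by
      have hne : ((γ + 1) * rs * δ) ≠ 0 := by positivity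
      rw [hMdef, div_mul_cancel₀ _ hne]
    have h3 : A * (B₀ - u r ^ 2 / 2) ≤ M * ((γ + 1) * r * (K₀ - u r ^ 2)) := by
      have hstep : A * (B₀ - u r ^ 2 / 2) ≤ A * B₀ := by nlinarith
      calc A * (B₀ - u r ^ 2 / 2) ≤ A * B₀ := hstep
        _ = M * ((γ + 1) * rs * δ) := hMδ.symm
        _ ≤ M * ((γ + 1) * r * (K₀ - u r ^ 2)) :=
            mul_le_mul_of_nonneg_left h2 hM.le
    nlinarith [mul_le_mul_of_nonneg_left h3 hu.le]
  -- the set of times up to which the invariant holds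
  obtain ⟨S, hSdef⟩ : ∃ S : Set ℝ,
      S = {t : ℝ | t ∈ Set.Icc rs r₁ ∧ ∀ s ∈ Set.Icc rs t, 0 < u s ∧ u s ≤ u rs} :=
    ⟨_, rfl⟩
  have hSmem : ∀ t, t ∈ S ↔
      (t ∈ Set.Icc rs r₁ ∧ ∀ s ∈ Set.Icc rs t, 0 < u s ∧ u s ≤ u rs) := by
    intro t; rw [hSdef]; rfl
  have hrsS : rs ∈ S := by
    rw [hSmem]
    refine ⟨⟨le_rfl, hrs1.le⟩, fun s hs => ?_⟩
    have : s = rs := le_antisymm hs.2 hs.1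
    rw [this]; exact ⟨hinit1, le_rfl⟩
  have hSne : S.Nonempty := ⟨rs, hrsS⟩
  have hSbdd : BddAbove S := ⟨r₁, fun t ht => ((hSmem t).mp ht).1.2⟩
  obtain ⟨T, hTdef⟩ : ∃ T : ℝ, T = sSup S := ⟨_, rfl⟩
  have hT1 : rs ≤ T := by rw [hTdef]; exact le_csSup hSbdd hrsS
  have hT2 : T ≤ r₁ := by
    rw [hTdef]; exact csSup_le hSne fun t ht => ((hSmem t).mp ht).1.2
  -- exponential (Grönwall) lower bound along members of S
  obtain ⟨ε, hεdef⟩ : ∃ e : ℝ, e = Real.exp (M * rs) * u rs / Real.exp (M * r₁) := ⟨_, rfl⟩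
  have hε : 0 < ε := by rw [hεdef]; positivity
  have lower : ∀ t ∈ S, ∀ s ∈ Set.Icc rs t, ε ≤ u s := by
    intro t ht s hs
    rw [hSmem] at ht
    have hsub : Set.Icc rs t ⊆ Set.Icc rs r₁ := Set.Icc_subset_Icc le_rfl ht.1.2
    have hgd : ∀ x ∈ Set.Icc rs t,
        HasDerivAt (fun y => Real.exp (M * y) * u y)
          (Real.exp (M * x) * M * u x + Real.exp (M * x) * f x) x := by
      intro x hx
      have h1 : HasDerivAt (fun y : ℝ => M * y) M x := by
        simpa using (hasDerivAt_id x).const_mul M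
      exact (h1.exp).mul (hode' x (hsub hx))
    have hg : MonotoneOn (fun y => Real.exp (M * y) * u y) (Set.Icc rs t) := by
      apply monotoneOn_of_deriv_nonneg (convex_Icc rs t)
      · exact fun x hx => ((hgd x hx).continuousAt).continuousWithinAt
      · intro x hx
        rw [interior_Icc] at hx
        exact ((hgd x (Set.Ioo_subset_Icc_self hx)).differentiableAt).differentiableWithinAt
      · intro x hx
        rw [interior_Icc] at hx
        have hx' : x ∈ Set.Icc rs t := Set.Ioo_subset_Icc_self hx
        rw [(hgd x hx').deriv]
        have hP := ht.2 x hx'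
        have hfb := (freg x (hsub hx') hP.1 hP.2).2
        nlinarith [Real.exp_pos (M * x), mul_le_mul_of_nonneg_left hfb (Real.exp_pos (M * x)).le]
    have hgs : Real.exp (M * rs) * u rs ≤ Real.exp (M * s) * u s :=
      hg ⟨le_rfl, hs.1.trans hs.2⟩ hs hs.1
    have hsr1 : s ≤ r₁ := hs.2.trans ht.1.2
    calc ε ≤ Real.exp (M * rs) * u rs / Real.exp (M * s) := by
          rw [hεdef]
          gcongr
      _ ≤ u s := by
          rw [div_le_iff₀ (Real.exp_pos _), mul_comm (u s)]
          exact hgs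
  -- invariant on [rs, T)
  have hlt_case : ∀ s, rs ≤ s → s < T → ε ≤ u s ∧ u s ≤ u rs := by
    intro s hrs' hsT
    rw [hTdef] at hsT
    obtain ⟨t, htS, hst⟩ := exists_lt_of_lt_csSup hSne hsT
    exact ⟨lower t htS s ⟨hrs', hst.le⟩,
      (((hSmem t).mp htS).2 s ⟨hrs', hst.le⟩).2⟩
  -- invariant at T by continuity
  have hT_case : ε ≤ u T ∧ u T ≤ u rs := by
    rcases eq_or_lt_of_le hT1 with heq | hlt
    · rw [← heq]
      exact ⟨lower rs hrsS rs ⟨le_rfl, le_rfl⟩, le_rfl⟩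
    · have hcT : ContinuousAt u T := (hode' T ⟨hT1, hT2⟩).continuousAt
      have htend : Filter.Tendsto u (nhdsWithin T (Set.Iio T)) (nhds (u T)) :=
        hcT.tendsto.mono_left nhdsWithin_le_nhds
      have hmem : Set.Ioo rs T ∈ nhdsWithin T (Set.Iio T) :=
        Ioo_mem_nhdsLT_of_mem ⟨hlt, le_rfl⟩
      constructor
      · refine ge_of_tendsto htend ?_
        filter_upwards [hmem] with s hs
        exact (hlt_case s hs.1.le hs.2).1
      · refine le_of_tendsto htend ?_
        filter_upwards [hmem] with s hs
        exact (hlt_case s hs.1.le hs.2).2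
  have hTS : ∀ s ∈ Set.Icc rs T, 0 < u s ∧ u s ≤ u rs := by
    intro s hs
    rcases eq_or_lt_of_le hs.2 with heq | hlt'
    · rw [heq]; exact ⟨hε.trans_le hT_case.1, hT_case.2⟩
    · obtain h := hlt_case s hs.1 hlt'
      exact ⟨hε.trans_le h.1, h.2⟩
  have hTSmem : T ∈ S := (hSmem T).mpr ⟨⟨hT1, hT2⟩, hTS⟩
  -- T must equal r₁
  have hTr : T = r₁ := by
    by_contra hne
    have hTlt : T < r₁ := lt_of_le_of_ne hT2 hne
    obtain ⟨hu0, hule⟩ := hTS T ⟨hT1, le_rfl⟩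
    have hfneg : f T < 0 := (freg T ⟨hT1, hT2⟩ hu0 hule).1
    have hslope : Filter.Tendsto (slope u T) (nhdsWithin T {T}ᶜ) (nhds (f T)) :=
      hasDerivAt_iff_tendsto_slope.mp (hode' T ⟨hT1, hT2⟩)
    have hslope' : Filter.Tendsto (slope u T) (nhdsWithin T (Set.Ioi T)) (nhds (f T)) :=
      hslope.mono_left (nhdsWithin_mono _ fun x hx => ne_of_gt hx)
    have hev1 : ∀ᶠ s in nhdsWithin T (Set.Ioi T), slope u T s < 0 :=
      hslope'.eventually (eventually_lt_nhds hfneg)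
    have hev2 : ∀ᶠ s in nhdsWithin T (Set.Ioi T), 0 < u s := by
      have hcT : ContinuousAt u T := (hode' T ⟨hT1, hT2⟩).continuousAt
      exact (hcT.tendsto.eventually (eventually_gt_nhds hu0)).filter_mono nhdsWithin_le_nhds
    obtain ⟨b, hb, hbsub⟩ :=
      mem_nhdsGT_iff_exists_Ioc_subset.mp (hev1.and hev2)
    obtain ⟨t', ht'def⟩ : ∃ t' : ℝ, t' = min b r₁ := ⟨_, rfl⟩
    have ht'T : T < t' := by rw [ht'def]; exact lt_min hb hTlt
    have ht'S : t' ∈ S := by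
      rw [hSmem]
      refine ⟨⟨hT1.trans ht'T.le, ht'def ▸ min_le_right _ _⟩, fun s hs => ?_⟩
      rcases le_or_gt s T with h | h
      · exact hTS s ⟨hs.1, h⟩
      · have hsb : s ∈ Set.Ioc T b := ⟨h, hs.2.trans (ht'def ▸ min_le_left b r₁)⟩
        obtain ⟨hsl, hsp⟩ := hbsub hsb
        have hden : 0 < s - T := sub_pos.mpr h
        rw [slope_def_field, div_lt_iff₀ hden] at hsl
        have husT : u s < u T := by
          have : u s - u T < 0 := by
            have := hsl
            simp only [zero_mul] at this
            -- slope_def_field : slope f a b = (f b - f a) / (b - a)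
            linarith [this]
          linarith
        exact ⟨hsp, husT.le.trans hule⟩
    have : t' ≤ T := by rw [hTdef]; exact le_csSup hSbdd ht'S
    linarith
  -- conclude
  intro r hr
  have hPall : 0 < u r ∧ u r ≤ u rs := hTS r (by rw [hTr]; exact hr)
  obtain ⟨hu0, hule⟩ := hPall
  have husq : u r ^ 2 < K₀ := by nlinarith
  refine ⟨⟨hu0, (Real.lt_sqrt hu0.le).mpr husq⟩, ?_⟩
  have hf := (freg r hr hu0 hule).1
  rw [hfdef] at hf
  simpa [hAdef] using hf
end

section
/- Let k₁, k₂ : [r_s, r₁] → ℝ be continuous with k₁ > 0 and k₂ > 0 on [r_s, r₁], let λ ≥ 0 and μ₀ > 0 be constants, and suppose q ∈ C¹([r_s, r₁]) with k₁q' differentiable satisfies (k₁ q')' = λ k₂ q on (r_s, r₁), the boundary conditions q'(r_s) − μ₀ q(r_s) = 0 and q'(r₁) = c/k₁(r₁) for a constant c, and moreover q(r_s) = −β c for some constant β > 0. Then c = 0 (and hence q ≡ 0). -/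
/-- ODE uniqueness lemma for the eigenfunction modes: if `(k₁ q')' = λ k₂ q` with
`q'(r_s) − μ₀ q(r_s) = 0`, `q'(r₁) = c/k₁(r₁)` and `q(r_s) = −β c` with `β > 0`,
then `c = 0` and `q ≡ 0`. -/
theorem stmt6 (rs r₁ μ₀ lam c β : ℝ) (hr : rs < r₁) (hμ : 0 < μ₀) (hlam : 0 ≤ lam)
    (hβ : 0 < β) (k₁ k₂ q qd : ℝ → ℝ)
    (hk₁c : ContinuousOn k₁ (Set.Icc rs r₁)) (hk₂c : ContinuousOn k₂ (Set.Icc rs r₁))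
    (hk₁ : ∀ r ∈ Set.Icc rs r₁, 0 < k₁ r) (hk₂ : ∀ r ∈ Set.Icc rs r₁, 0 < k₂ r)
    (hq : ∀ r ∈ Set.Icc rs r₁, HasDerivWithinAt q (qd r) (Set.Icc rs r₁) r)
    (hqd : ContinuousOn qd (Set.Icc rs r₁))
    (hode : ∀ r ∈ Set.Ioo rs r₁,
      HasDerivAt (fun s => k₁ s * qd s) (lam * k₂ r * q r) r)
    (hbc1 : qd rs - μ₀ * q rs = 0) (hbc2 : qd r₁ = c / k₁ r₁)
    (hqrs : q rs = -β * c) :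
    c = 0 ∧ ∀ r ∈ Set.Icc rs r₁, q r = 0 := by
  have hrs : rs ∈ Set.Icc rs r₁ := ⟨le_refl _, hr.le⟩
  have hr1 : r₁ ∈ Set.Icc rs r₁ := ⟨hr.le, le_refl _⟩
  have hqc : ContinuousOn q (Set.Icc rs r₁) := fun r hrm => (hq r hrm).continuousWithinAt
  set F : ℝ → ℝ := fun r => k₁ r * qd r * q r with hFdef
  have hFc : ContinuousOn F (Set.Icc rs r₁) := (hk₁c.mul hqd).mul hqc
  have hqat : ∀ r ∈ Set.Ioo rs r₁, HasDerivAt q (qd r) r := by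
    intro r hrm
    exact (hq r (Set.Ioo_subset_Icc_self hrm)).hasDerivAt (Icc_mem_nhds hrm.1 hrm.2)
  have hF' : ∀ r ∈ Set.Ioo rs r₁,
      HasDerivAt F (lam * k₂ r * q r * q r + k₁ r * qd r * qd r) r := by
    intro r hrm
    have h := (hode r hrm).fun_mul (hqat r hrm)
    exact h
  have hF'nonneg : ∀ r ∈ Set.Ioo rs r₁,
      0 ≤ lam * k₂ r * q r * q r + k₁ r * qd r * qd r := by
    intro r hrm
    have h1 := hk₁ r (Set.Ioo_subset_Icc_self hrm)
    have h2 := hk₂ r (Set.Ioo_subset_Icc_self hrm)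
    nlinarith [mul_nonneg (mul_nonneg hlam h2.le) (mul_self_nonneg (q r)),
      mul_nonneg h1.le (mul_self_nonneg (qd r))]
  have hFmono : MonotoneOn F (Set.Icc rs r₁) := by
    apply monotoneOn_of_deriv_nonneg (convex_Icc rs r₁) hFc
    · intro r hrm
      rw [interior_Icc] at hrm
      exact (hF' r hrm).differentiableAt.differentiableWithinAt
    · intro r hrm
      rw [interior_Icc] at hrm
      rw [(hF' r hrm).deriv]
      exact hF'nonneg r hrm
  have hqdrs : qd rs = μ₀ * q rs := by linarith
  have hFrs : 0 ≤ F rs := by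
    have h1 := hk₁ rs hrs
    simp only [hFdef, hqdrs]
    nlinarith [mul_nonneg (mul_nonneg h1.le hμ.le) (mul_self_nonneg (q rs))]
  have hFnn : ∀ r ∈ Set.Icc rs r₁, 0 ≤ F r :=
    fun r hrm => hFrs.trans (hFmono hrs hrm hrm.1)
  have hFr1 : F r₁ = c * q r₁ := by
    have hk := (hk₁ r₁ hr1).ne'
    simp only [hFdef, hbc2]
    field_simp
  have hc : c = 0 := by
    by_contra hc
    have hqrs2 : 0 < q rs * q rs := by
      rw [hqrs]
      nlinarith [mul_pos (mul_pos hβ hβ) (mul_self_pos.mpr hc)]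
    have hGmono : MonotoneOn (fun r => q r * q r) (Set.Icc rs r₁) := by
      apply monotoneOn_of_deriv_nonneg (convex_Icc rs r₁) (hqc.mul hqc)
      · intro r hrm; rw [interior_Icc] at hrm
        exact ((hqat r hrm).mul (hqat r hrm)).differentiableAt.differentiableWithinAt
      · intro r hrm; rw [interior_Icc] at hrm
        rw [((hqat r hrm).mul (hqat r hrm)).deriv]
        have h0 := hFnn r (Set.Ioo_subset_Icc_self hrm)
        have h1 := hk₁ r (Set.Ioo_subset_Icc_self hrm)
        simp only [hFdef] at h0
        nlinarith [h0, h1]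
    have hqne : ∀ r ∈ Set.Icc rs r₁, q r ≠ 0 := by
      intro r hrm h0
      have hm := hGmono hrs hrm hrm.1
      simp only [h0] at hm
      nlinarith
    have hsign : 0 < q rs * q r₁ := by
      rcases lt_trichotomy (q rs * q r₁) 0 with h | h | h
      · exfalso
        rcases le_total (q rs) (q r₁) with hle | hle
        · have h0mem : (0:ℝ) ∈ Set.Icc (q rs) (q r₁) := by
            constructor <;> nlinarith
          obtain ⟨x, hx, hx0⟩ := intermediate_value_Icc hr.le hqc h0mem
          exact hqne x hx hx0
        · have h0mem : (0:ℝ) ∈ Set.Icc (q r₁) (q rs) := by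
            constructor <;> nlinarith
          obtain ⟨x, hx, hx0⟩ := intermediate_value_Icc' hr.le hqc h0mem
          exact hqne x hx hx0
      · exact absurd (mul_eq_zero.mp h)
          (by push_neg; exact ⟨hqne rs hrs, hqne r₁ hr1⟩)
      · exact h
    have hnn : 0 ≤ c * q r₁ := by
      have := hFnn r₁ hr1
      rwa [hFr1] at this
    have h1 : c * q rs < 0 := by
      rw [hqrs]
      nlinarith [mul_self_pos.mpr hc]
    nlinarith [mul_pos (mul_self_pos.mpr hc) hsign, hnn, h1]
  subst hc
  have hq0rs : q rs = 0 := by rw [hqrs]; ring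
  have hqd0rs : qd rs = 0 := by rw [hqdrs, hq0rs, mul_zero]
  have hFrs0 : F rs = 0 := by simp [hFdef, hqd0rs]
  have hFr10 : F r₁ = 0 := by rw [hFr1]; ring
  have hF0 : ∀ r ∈ Set.Icc rs r₁, F r = 0 := by
    intro r hrm
    have h1 := hFmono hrs hrm hrm.1
    have h2 := hFmono hrm hr1 hrm.2
    rw [hFrs0] at h1
    rw [hFr10] at h2
    linarith
  have hqd0 : ∀ r ∈ Set.Ico rs r₁, qd r = 0 := by
    intro r hrm
    rcases eq_or_lt_of_le hrm.1 with h | h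
    · rw [← h]; exact hqd0rs
    · have hio : r ∈ Set.Ioo rs r₁ := ⟨h, hrm.2⟩
      have hD := hF' r hio
      have heq : F =ᶠ[nhds r] fun _ => (0:ℝ) :=
        Filter.eventuallyEq_of_mem (Icc_mem_nhds hio.1 hio.2) (fun x hx => hF0 x hx)
      have hzero : HasDerivAt F 0 r := (hasDerivAt_const r (0:ℝ)).congr_of_eventuallyEq heq
      have huniq := hD.unique hzero
      have h1 := hk₁ r (Set.Ioo_subset_Icc_self hio)
      have h2 := hk₂ r (Set.Ioo_subset_Icc_self hio)
      have h3 : qd r * qd r ≤ 0 := by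
        nlinarith [huniq, h1,
          mul_nonneg (mul_nonneg hlam h2.le) (mul_self_nonneg (q r))]
      exact mul_self_eq_zero.mp (le_antisymm h3 (mul_self_nonneg (qd r)))
  have hdiff : DifferentiableOn ℝ q (Set.Icc rs r₁) :=
    fun x hx => (hq x hx).differentiableWithinAt
  have hderiv0 : ∀ x ∈ Set.Ico rs r₁, derivWithin q (Set.Icc rs r₁) x = 0 := by
    intro x hx
    rw [(hq x (Set.Ico_subset_Icc_self hx)).derivWithin
      ((uniqueDiffOn_Icc hr) x (Set.Ico_subset_Icc_self hx))]
    exact hqd0 x hx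
  have hconst := constant_of_derivWithin_zero hdiff hderiv0
  exact ⟨rfl, fun r hrm => (hconst r hrm).trans hq0rs⟩
end

section
/- Let γ > 1, B₀ > 0, K₀ = 2(γ−1)B₀/(γ+1). Suppose ρ₋, p₋, v₋ > 0 satisfy the Bernoulli law v₋²/2 + γp₋/((γ−1)ρ₋) = B₀ and v₋² > K₀ and v₋² < 2B₀. Define the downstream state v₊ = K₀/v₋, p₊ = ρ₋v₋² + p₋ − ρ₋K₀, ρ₊ = γp₊/((γ−1)(B₀ − v₊²/2)). Then the specific entropy strictly increases across the shock: p₊/ρ₊^γ > p₋/ρ₋^γ. -/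
set_option maxHeartbeats 1000000

/-- Auxiliary: `(γ-1)x^γ - γx^(γ-1) + 1 > 0` for `x > 1`, `γ > 1`. -/
lemma stmt16_phi_pos {γ : ℝ} (hγ : 1 < γ) {β : ℝ} (hβ : 1 < β) :
    0 < (γ - 1) * β ^ γ - γ * β ^ (γ - 1) + 1 := by
  set f : ℝ → ℝ := fun x => (γ - 1) * x ^ γ - γ * x ^ (γ - 1) + 1 with hf
  have hmono : StrictMonoOn f (Set.Ici 1) := by
    apply strictMonoOn_of_deriv_pos (convex_Ici 1)
    · intro x hx
      have hx0 : x ≠ 0 := ne_of_gt (lt_of_lt_of_le one_pos hx)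
      exact (((continuousAt_const.mul (Real.continuousAt_rpow_const x γ (Or.inl hx0))).sub
        (continuousAt_const.mul (Real.continuousAt_rpow_const x (γ - 1) (Or.inl hx0)))).add
        continuousAt_const).continuousWithinAt
    · intro x hx
      rw [interior_Ici] at hx
      have hxpos : (0:ℝ) < x := lt_trans one_pos hx
      have h1 : HasDerivAt (fun y : ℝ => y ^ γ) (γ * x ^ (γ - 1)) x :=
        Real.hasDerivAt_rpow_const (Or.inl hxpos.ne')
      have h2 : HasDerivAt (fun y : ℝ => y ^ (γ - 1)) ((γ - 1) * x ^ (γ - 1 - 1)) x :=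
        Real.hasDerivAt_rpow_const (Or.inl hxpos.ne')
      have hF : HasDerivAt f ((γ - 1) * (γ * x ^ (γ - 1)) - γ * ((γ - 1) * x ^ (γ - 1 - 1))) x :=
        (((h1.const_mul (γ - 1)).sub (h2.const_mul γ)).add_const 1)
      rw [hF.deriv]
      have hxx : x ^ (γ - 1) = x ^ (γ - 1 - 1) * x := by
        rw [← Real.rpow_add_one hxpos.ne' (γ - 1 - 1)]
        norm_num
      rw [hxx]
      have hA : 0 < x ^ (γ - 1 - 1) := Real.rpow_pos_of_pos hxpos _
      nlinarith [mul_pos (mul_pos (mul_pos (show (0:ℝ) < γ by linarith)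
        (show (0:ℝ) < γ - 1 by linarith)) hA) (sub_pos.mpr hx)]
  have h1mem : (1:ℝ) ∈ Set.Ici (1:ℝ) := Set.self_mem_Ici
  have hβmem : β ∈ Set.Ici (1:ℝ) := le_of_lt hβ
  have := hmono h1mem hβmem hβ
  have hf1 : f 1 = 0 := by simp [hf, Real.one_rpow]
  rw [hf1] at this
  simpa [hf] using this

/-- Auxiliary key inequality: `β^γ ((γ+1) - (γ-1)β) < (γ+1)β - (γ-1)` for `β > 1`. -/
lemma stmt16_key {γ : ℝ} (hγ : 1 < γ) {β : ℝ} (hβ : 1 < β) :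
    β ^ γ * ((γ + 1) - (γ - 1) * β) < (γ + 1) * β - (γ - 1) := by
  set g : ℝ → ℝ := fun x => (γ + 1) * x - (γ - 1) - x ^ γ * ((γ + 1) - (γ - 1) * x) with hg
  have hmono : StrictMonoOn g (Set.Ici 1) := by
    apply strictMonoOn_of_deriv_pos (convex_Ici 1)
    · intro x hx
      have hx0 : x ≠ 0 := ne_of_gt (lt_of_lt_of_le one_pos hx)
      exact (((continuousAt_const.mul continuousAt_id).sub continuousAt_const).sub
        ((Real.continuousAt_rpow_const x γ (Or.inl hx0)).mul
          (continuousAt_const.sub (continuousAt_const.mul continuousAt_id)))).continuousWithinAt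
    · intro x hx
      rw [interior_Ici] at hx
      have hxpos : (0:ℝ) < x := lt_trans one_pos hx
      have h1 : HasDerivAt (fun y : ℝ => (γ + 1) * y - (γ - 1)) ((γ + 1) * 1) x :=
        ((hasDerivAt_id x).const_mul (γ + 1)).sub_const (γ - 1)
      have h2 : HasDerivAt (fun y : ℝ => y ^ γ) (γ * x ^ (γ - 1)) x :=
        Real.hasDerivAt_rpow_const (Or.inl hxpos.ne')
      have h3 : HasDerivAt (fun y : ℝ => (γ + 1) - (γ - 1) * y) (-((γ - 1) * 1)) x :=
        ((hasDerivAt_id x).const_mul (γ - 1)).const_sub (γ + 1)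
      have hG : HasDerivAt g ((γ + 1) * 1 -
          (γ * x ^ (γ - 1) * ((γ + 1) - (γ - 1) * x) + x ^ γ * -((γ - 1) * 1))) x :=
        h1.sub (h2.mul h3)
      rw [hG.deriv]
      have hxx : x ^ γ = x ^ (γ - 1) * x := by
        rw [← Real.rpow_add_one hxpos.ne' (γ - 1)]
        norm_num
      have hφ := stmt16_phi_pos hγ hx
      rw [hxx] at hφ ⊢
      nlinarith [mul_pos (show (0:ℝ) < γ + 1 by linarith) hφ]
  have h1mem : (1:ℝ) ∈ Set.Ici (1:ℝ) := Set.self_mem_Ici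
  have hβmem : β ∈ Set.Ici (1:ℝ) := le_of_lt hβ
  have := hmono h1mem hβmem hβ
  have hg1 : g 1 = 0 := by simp [hg, Real.one_rpow]
  rw [hg1] at this
  simp only [hg] at this
  linarith

/-- Entropy increases strictly across a transonic normal shock of ideal polytropic gas:
`p₊/ρ₊^γ > p₋/ρ₋^γ`. -/
theorem stmt16 (γ B₀ ρm pm vm : ℝ) (hγ : 1 < γ) (hB : 0 < B₀)
    (K₀ : ℝ) (hK : K₀ = 2 * (γ - 1) * B₀ / (γ + 1))
    (hρ : 0 < ρm) (hp : 0 < pm) (hv : 0 < vm)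
    (hbern : vm ^ 2 / 2 + γ * pm / ((γ - 1) * ρm) = B₀)
    (hsup : K₀ < vm ^ 2) (hbound : vm ^ 2 < 2 * B₀) :
    let vp := K₀ / vm
    let pp := ρm * vm ^ 2 + pm - ρm * K₀
    let ρp := γ * pp / ((γ - 1) * (B₀ - vp ^ 2 / 2))
    pm / ρm ^ γ < pp / ρp ^ γ := by
  intro vp pp ρp
  have hvp : vp = K₀ / vm := rfl
  have hpp0 : pp = ρm * vm ^ 2 + pm - ρm * K₀ := rfl
  have hρp0 : ρp = γ * pp / ((γ - 1) * (B₀ - vp ^ 2 / 2)) := rfl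
  clear_value vp pp ρp
  have hγ1 : (0:ℝ) < γ - 1 := by linarith
  have hγ2 : (0:ℝ) < γ + 1 := by linarith
  have hK0 : 0 < K₀ := by rw [hK]; positivity
  obtain ⟨β, hβdef⟩ : ∃ b : ℝ, b = vm ^ 2 / K₀ := ⟨_, rfl⟩
  have hβ1 : 1 < β := by rw [hβdef]; exact (one_lt_div hK0).2 hsup
  have hβ0 : 0 < β := by linarith
  have h1 : γ * pm = (γ - 1) * ρm * (B₀ - vm ^ 2 / 2) := by
    have h := hbern
    field_simp at h
    linarith
  have h2 : K₀ * (γ + 1) = 2 * (γ - 1) * B₀ := by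
    rw [hK]; field_simp
  have h3 : β * K₀ = vm ^ 2 := by
    rw [hβdef]; field_simp
  have hpm' : 2 * γ * pm = ρm * K₀ * ((γ + 1) - (γ - 1) * β) := by
    linear_combination 2 * h1 - ρm * h2 + (γ - 1) * ρm * h3
  have hpp' : 2 * γ * pp = ρm * K₀ * ((γ + 1) * β - (γ - 1)) := by
    linear_combination 2 * γ * hpp0 + hpm' - 2 * γ * ρm * h3
  have hvp2 : vp ^ 2 * vm ^ 2 = K₀ ^ 2 := by
    rw [hvp]; field_simp
  have hden : 2 * vm ^ 2 * ((γ - 1) * (B₀ - vp ^ 2 / 2)) = K₀ ^ 2 * ((γ + 1) * β - (γ - 1)) := by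
    linear_combination -vm ^ 2 * h2 - (γ - 1) * hvp2 - K₀ * (γ + 1) * h3
  have haβ : 0 < (γ + 1) * β - (γ - 1) := by nlinarith
  have h2v : (0:ℝ) < 2 * vm ^ 2 := by positivity
  have hDpos : 0 < (γ - 1) * (B₀ - vp ^ 2 / 2) := by
    nlinarith [hden, mul_pos (pow_pos hK0 2) haβ]
  have hpp_pos : 0 < pp := by
    nlinarith [hpp', mul_pos (mul_pos hρ hK0) haβ]
  have hρp : ρp = ρm * β := by
    rw [hρp0, div_eq_iff hDpos.ne']
    have h7 : 2 * vm ^ 2 * (γ * pp) = 2 * vm ^ 2 * (ρm * β * ((γ - 1) * (B₀ - vp ^ 2 / 2))) := by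
      linear_combination vm ^ 2 * hpp' - ρm * β * hden - ρm * K₀ * ((γ + 1) * β - (γ - 1)) * h3
    exact mul_left_cancel₀ (ne_of_gt h2v) h7
  have hrpow : ρp ^ γ = ρm ^ γ * β ^ γ := by
    rw [hρp]; exact Real.mul_rpow hρ.le hβ0.le
  have hrmγ : 0 < ρm ^ γ := Real.rpow_pos_of_pos hρ γ
  have hβγ : 0 < β ^ γ := Real.rpow_pos_of_pos hβ0 γ
  rw [hrpow, div_lt_div_iff₀ hrmγ (by positivity)]
  have hkey := stmt16_key hγ hβ1
  have e1 : 2 * γ * (pm * β ^ γ) = ρm * K₀ * ((γ + 1) - (γ - 1) * β) * β ^ γ := by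
    linear_combination β ^ γ * hpm'
  have e2 : ρm * K₀ * ((γ + 1) - (γ - 1) * β) * β ^ γ < ρm * K₀ * ((γ + 1) * β - (γ - 1)) := by
    nlinarith [mul_lt_mul_of_pos_left hkey (mul_pos hρ hK0)]
  have e3 : 2 * γ * (pm * β ^ γ) < 2 * γ * pp := by rw [e1, hpp']; exact e2
  have hlt : pm * β ^ γ < pp := by
    have h2γ : (0:ℝ) < 2 * γ := by linarith
    exact lt_of_mul_lt_mul_left e3 h2γ.le
  nlinarith [mul_lt_mul_of_pos_right hlt hrmγ]
end
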